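/- Combined perturbation bound: if the Arnoldi process is perturbed both by inexact products E_k and by truncation errors F_k, satisfying 𝒜V_m − [vec(E₁+F₁),…,vec(E_m+F_m)] = V_{m+1}H̲_m with V_{m+1} having orthonormal columns, then for any y_m ∈ ℝ^m the true residual r_m = b + 𝒜V_m y_m satisfies ‖r_m‖ ≤ ‖r̃_m‖ + ∑_{j=1}^m (‖E_j‖ + ‖F_j‖)·|e_jᵀ y_m|, where r̃_m = b + V_{m+1}H̲_m y_m is the computed residual. -/

import Mathlib

open Matrix

/-- `vec` stacks the columns of a matrix. -/
def vecM {n : ℕ} (X : Matrix (Fin n) (Fin n) ℝ) : Fin n × Fin n → ℝ := fun p => X p.2 p.1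

/-- Euclidean norm of a vector indexed by Fin n × Fin n. -/
noncomputable def enormP {n : ℕ} (x : Fin n × Fin n → ℝ) : ℝ := Real.sqrt (∑ p, x p ^ 2)

/-- Frobenius norm of an n×n matrix. -/
noncomputable def fnorm {n : ℕ} (M : Matrix (Fin n) (Fin n) ℝ) : ℝ :=
  Real.sqrt ((Mᵀ * M).trace)

noncomputable def toE {n : ℕ} (x : Fin n × Fin n → ℝ) : EuclideanSpace ℝ (Fin n × Fin n) := WithLp.toLp 2 x

lemma toE_add {n : ℕ} (x y : Fin n × Fin n → ℝ) : toE (x + y) = toE x + toE y := rfl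
lemma toE_smul {n : ℕ} (c : ℝ) (x : Fin n × Fin n → ℝ) : toE (c • x) = c • toE x := rfl
lemma toE_sum {n m : ℕ} (f : Fin m → (Fin n × Fin n → ℝ)) :
    toE (∑ j, f j) = ∑ j, toE (f j) := WithLp.toLp_sum 2 _ Finset.univ f

lemma enormP_eq_norm {n : ℕ} (x : Fin n × Fin n → ℝ) : enormP x = ‖toE x‖ := by
  rw [EuclideanSpace.norm_eq]
  simp [enormP, toE, Real.norm_eq_abs, sq_abs]

lemma fnorm_eq {n : ℕ} (M : Matrix (Fin n) (Fin n) ℝ) : fnorm M = enormP (vecM M) := by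
  unfold fnorm enormP vecM
  congr 1
  simp [Matrix.trace, Matrix.diag, Matrix.mul_apply, Fintype.sum_prod_type, sq]

/-- Combined perturbation bound: if
𝒜V_m − [vec(E₁+F₁),…,vec(E_m+F_m)] = V_{m+1}H̲_m with V_{m+1} having orthonormal
columns, then ‖r_m‖ ≤ ‖r̃_m‖ + ∑ⱼ (‖Eⱼ‖ + ‖Fⱼ‖)|eⱼᵀy| where r_m = b + 𝒜V_m y,
r̃_m = b + V_{m+1}H̲_m y and b = vec(C₁C₂ᵀ). -/
theorem combined_perturbation_bound {n q m : ℕ}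
    (A : Matrix (Fin n × Fin n) (Fin n × Fin n) ℝ)
    (V : Matrix (Fin n × Fin n) (Fin (m + 1)) ℝ) (hV : Vᵀ * V = 1)
    (E F : Fin m → Matrix (Fin n) (Fin n) ℝ)
    (H : Matrix (Fin (m + 1)) (Fin m) ℝ)
    (hArn : A * V.submatrix id Fin.castSucc -
      (Matrix.of fun i j => vecM (E j + F j) i) = V * H)
    (C₁ C₂ : Matrix (Fin n) (Fin q) ℝ) (y : Fin m → ℝ) :
    enormP (vecM (C₁ * C₂ᵀ) + (A * V.submatrix id Fin.castSucc).mulVec y) ≤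
      enormP (vecM (C₁ * C₂ᵀ) + (V * H).mulVec y) +
      ∑ j, (fnorm (E j) + fnorm (F j)) * |y j| := by
  set G : Matrix (Fin n × Fin n) (Fin m) ℝ :=
    Matrix.of (fun i j => vecM (E j + F j) i) with hG
  have hAV : A * V.submatrix id Fin.castSucc = V * H + G := by
    rw [← hArn, sub_add_cancel]
  have h1 : vecM (C₁ * C₂ᵀ) + (A * V.submatrix id Fin.castSucc).mulVec y
      = (vecM (C₁ * C₂ᵀ) + (V * H).mulVec y) + G.mulVec y := by
    rw [hAV, Matrix.add_mulVec]; abel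
  have hGy : G.mulVec y = ∑ j, y j • (vecM (E j) + vecM (F j)) := by
    funext i
    simp only [Matrix.mulVec, dotProduct, hG, Matrix.of_apply, Finset.sum_apply,
      Pi.smul_apply, Pi.add_apply, vecM, Matrix.add_apply, smul_eq_mul]
    exact Finset.sum_congr rfl fun j _ => by ring
  rw [h1, enormP_eq_norm, toE_add]
  refine (norm_add_le _ _).trans (add_le_add (le_of_eq (enormP_eq_norm _).symm) ?_)
  rw [hGy, toE_sum]
  refine (norm_sum_le _ _).trans (Finset.sum_le_sum fun j _ => ?_)
  rw [fnorm_eq, fnorm_eq, toE_smul, norm_smul, Real.norm_eq_abs, mul_comm]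
  refine mul_le_mul_of_nonneg_right ?_ (abs_nonneg _)
  rw [toE_add, enormP_eq_norm, enormP_eq_norm]
  exact norm_add_le _ _
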